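/- Fix y ∈ A. The function u : A → ℝ defined by u(x) = A_0(y) + B_0(y) log|x| − Σ_{m=1}^∞ (1/m)(A_m(y)|x|^m + B_m(y)|x|^{−m}) cos m(θ − θ_y), where x = (|x| cos θ, |x| sin θ), is twice continuously differentiable on A and harmonic there, i.e. ∂²u/∂x₁² + ∂²u/∂x₂² = 0 at every point of A. Equivalently, x ↦ G_A(x,y) + log|x − y| extends to a harmonic function on all of A. -/

import Mathlib

/-- The coefficient `A_0(y)` of the Green function of the annulus `{a < |x| < b}`,
as a function of `s = |y|`. -/
noncomputable def A0 (a b s : ℝ) : ℝ := Real.log b * (Real.log (a / s) / Real.log (a / b))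

/-- The coefficient `B_0(y)`, as a function of `s = |y|`. -/
noncomputable def B0 (a b s : ℝ) : ℝ := Real.log (s / b) / Real.log (a / b)

/-- The Fourier coefficient `A_m(y)`, as a function of `s = |y|`. -/
noncomputable def Acoef (a b s : ℝ) (m : ℕ) : ℝ :=
  (s ^ m - (a ^ 2 / s) ^ m) / (b ^ (2 * m) - a ^ (2 * m))

/-- The Fourier coefficient `B_m(y)`, as a function of `s = |y|`. -/
noncomputable def Bcoef (a b s : ℝ) (m : ℕ) : ℝ :=
  a ^ (2 * m) * ((b ^ 2 / s) ^ m - s ^ m) / (b ^ (2 * m) - a ^ (2 * m))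

/-- The point `p = (p₁, p₂) ∈ ℝ²` viewed as the complex number `p₁ + i p₂`. -/
noncomputable def zOf (p : ℝ × ℝ) : ℂ := (p.1 : ℂ) + p.2 * Complex.I

/-- The regular part `u(x) = A_0(y) + B_0(y) log|x| - Σ_{m≥1} (1/m)(A_m(y)|x|^m +
B_m(y)|x|^{-m}) cos m(θ - θ_y)` of the Green function `G_A(·, y)`, written intrinsically:
for `x = (rcos θ, rsin θ)` (i.e. `z = r e^{iθ}`) one has
`|x|^m cos m(θ - α) = Re (z^m e^{-imα})` and `|x|^{-m} cos m(θ - α) = Re (z^{-m} e^{imα})`.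
Here `y = (s cos α, s sin α)`. -/
noncomputable def uReg (a b s α : ℝ) (p : ℝ × ℝ) : ℝ :=
  A0 a b s + B0 a b s * Real.log (‖zOf p‖)
  - ∑' m : ℕ, (1 / (m + 1 : ℝ)) *
      (Acoef a b s (m + 1) *
        ((zOf p) ^ (m + 1) * Complex.exp (-((m + 1 : ℝ) * α) * Complex.I)).re
      + Bcoef a b s (m + 1) *
        ((zOf p) ^ (-(m + 1 : ℤ)) * Complex.exp (((m + 1 : ℝ) * α) * Complex.I)).re)

namespace GreenRegAux
open Complex

/-- The `m`-th complex term of the series. -/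
noncomputable def cterm (a b s α : ℝ) (m : ℕ) (z : ℂ) : ℂ :=
  ((1 / (m + 1 : ℝ) : ℝ) : ℂ) *
    ((Acoef a b s (m + 1) : ℂ) * (z ^ (m + 1) * Complex.exp (-((m + 1 : ℝ) * α) * Complex.I))
     + (Bcoef a b s (m + 1) : ℂ) * (z ^ (-(m + 1 : ℤ)) * Complex.exp (((m + 1 : ℝ) * α) * Complex.I)))

lemma re_cterm (a b s α : ℝ) (m : ℕ) (z : ℂ) :
    (cterm a b s α m z).re =
      (1 / (m + 1 : ℝ)) *
        (Acoef a b s (m + 1) * (z ^ (m + 1) * Complex.exp (-((m + 1 : ℝ) * α) * Complex.I)).re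
        + Bcoef a b s (m + 1) * (z ^ (-(m + 1 : ℤ)) * Complex.exp (((m + 1 : ℝ) * α) * Complex.I)).re) := by
  rw [cterm, Complex.re_ofReal_mul, Complex.add_re, Complex.re_ofReal_mul, Complex.re_ofReal_mul]

/-- Norm bound for the terms, uniform on the annulus. -/
lemma norm_cterm_le (a b s α : ℝ) (ha : 0 < a) (hab : a < b) (hs₁ : a < s) (hs₂ : s < b)
    (m : ℕ) (z : ℂ) (hz₁ : a < ‖z‖) (hz₂ : ‖z‖ < b) :
    ‖cterm a b s α m z‖ ≤ ((s / b) ^ (m + 1) + (a / s) ^ (m + 1)) / (1 - (a / b) ^ 2) := by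
  have hb : (0:ℝ) < b := ha.trans hab
  have hs : (0:ℝ) < s := ha.trans hs₁
  have hr : (0:ℝ) < ‖z‖ := ha.trans hz₁
  have hbne : b ≠ 0 := hb.ne'
  have hsne : s ≠ 0 := hs.ne'
  have hane : a ≠ 0 := ha.ne'
  set r := ‖z‖ with hrdef
  have hcden : (0:ℝ) < 1 - (a / b) ^ 2 := by
    have : (a / b) ^ 2 < 1 := pow_lt_one₀ (by positivity) ((div_lt_one hb).2 hab) two_ne_zero
    linarith
  have hcne : (1 - (a / b) ^ 2) ≠ 0 := hcden.ne'
  have hD : b ^ (2 * (m + 1)) * (1 - (a / b) ^ 2) ≤ b ^ (2 * (m + 1)) - a ^ (2 * (m + 1)) := by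
    have h1 : a ^ (2 * (m + 1)) ≤ a ^ 2 * b ^ (2 * m) := by
      have e : a ^ (2 * (m + 1)) = a ^ 2 * a ^ (2 * m) := by
        rw [show 2 * (m + 1) = 2 + 2 * m by ring, pow_add]
      rw [e]
      have : a ^ (2 * m) ≤ b ^ (2 * m) := pow_le_pow_left₀ ha.le hab.le _
      nlinarith
    have h2 : b ^ (2 * (m + 1)) * (a / b) ^ 2 = a ^ 2 * b ^ (2 * m) := by
      rw [show 2 * (m + 1) = 2 * m + 2 by ring, pow_add]
      field_simp
    nlinarith [h2]
  have hDpos : (0:ℝ) < b ^ (2 * (m + 1)) - a ^ (2 * (m + 1)) := by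
    have : (0:ℝ) < b ^ (2 * (m + 1)) * (1 - (a / b) ^ 2) := by positivity
    linarith
  -- coefficient bounds
  have hA : |Acoef a b s (m + 1)| ≤ s ^ (m + 1) / (b ^ (2 * (m + 1)) * (1 - (a / b) ^ 2)) := by
    rw [Acoef, abs_div, _root_.abs_of_pos hDpos]
    have hnum : |s ^ (m + 1) - (a ^ 2 / s) ^ (m + 1)| ≤ s ^ (m + 1) := by
      have h1 : (a ^ 2 / s) ^ (m + 1) ≤ s ^ (m + 1) := by
        apply pow_le_pow_left₀ (by positivity)
        rw [div_le_iff₀ hs]; nlinarith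
      have h2 : (0:ℝ) ≤ (a ^ 2 / s) ^ (m + 1) := by positivity
      rw [abs_le]; constructor <;> nlinarith
    exact div_le_div₀ (by positivity) hnum (by positivity) hD
  have hB : |Bcoef a b s (m + 1)| ≤
      a ^ (2 * (m + 1)) * (b ^ 2 / s) ^ (m + 1) / (b ^ (2 * (m + 1)) * (1 - (a / b) ^ 2)) := by
    rw [Bcoef, abs_div, _root_.abs_of_pos hDpos]
    have hnum : |a ^ (2 * (m + 1)) * ((b ^ 2 / s) ^ (m + 1) - s ^ (m + 1))|
        ≤ a ^ (2 * (m + 1)) * (b ^ 2 / s) ^ (m + 1) := by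
      rw [abs_mul, _root_.abs_of_nonneg (by positivity : (0:ℝ) ≤ a ^ (2 * (m + 1)))]
      have h1 : s ^ (m + 1) ≤ (b ^ 2 / s) ^ (m + 1) := by
        apply pow_le_pow_left₀ hs.le
        rw [le_div_iff₀ hs]; nlinarith
      have h2 : (0:ℝ) ≤ s ^ (m + 1) := by positivity
      have h3 : |(b ^ 2 / s) ^ (m + 1) - s ^ (m + 1)| ≤ (b ^ 2 / s) ^ (m + 1) := by
        rw [_root_.abs_of_nonneg (by linarith)]; linarith
      exact mul_le_mul_of_nonneg_left h3 (by positivity)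
    exact div_le_div₀ (by positivity) hnum (by positivity) hD
  -- norms of the unimodular factors
  have e1 : ‖Complex.exp (-((m + 1 : ℝ) * α) * Complex.I)‖ = 1 := by
    rw [Complex.norm_exp]; simp
  have e2 : ‖Complex.exp (((m + 1 : ℝ) * α) * Complex.I)‖ = 1 := by
    rw [Complex.norm_exp]; simp
  have hzpow : ‖z ^ (-(m + 1 : ℤ))‖ = r⁻¹ ^ (m + 1) := by
    rw [norm_zpow, show (-(m + 1 : ℤ)) = -((m + 1 : ℕ) : ℤ) by push_cast; ring,
      zpow_neg, zpow_natCast, ← inv_pow]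
  have hA1 : ‖(Acoef a b s (m + 1) : ℂ) * (z ^ (m + 1) * Complex.exp (-((m + 1 : ℝ) * α) * Complex.I))‖
      = |Acoef a b s (m + 1)| * r ^ (m + 1) := by
    rw [norm_mul, norm_mul, Complex.norm_real, Real.norm_eq_abs,
      norm_pow, e1, mul_one]
  have hB1 : ‖(Bcoef a b s (m + 1) : ℂ) * (z ^ (-(m + 1 : ℤ)) * Complex.exp (((m + 1 : ℝ) * α) * Complex.I))‖
      = |Bcoef a b s (m + 1)| * r⁻¹ ^ (m + 1) := by
    rw [norm_mul, norm_mul, Complex.norm_real, Real.norm_eq_abs,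
      hzpow, e2, mul_one]
  have h0 : ‖((1 / (m + 1 : ℝ) : ℝ) : ℂ)‖ ≤ 1 := by
    rw [Complex.norm_real, Real.norm_eq_abs, _root_.abs_of_pos (by positivity)]
    rw [div_le_one (by positivity)]
    linarith [Nat.cast_nonneg (α := ℝ) m]
  have hnorm : ‖cterm a b s α m z‖
      ≤ |Acoef a b s (m + 1)| * r ^ (m + 1) + |Bcoef a b s (m + 1)| * r⁻¹ ^ (m + 1) := by
    rw [cterm, norm_mul]
    have h1 := (norm_add_le ((Acoef a b s (m + 1) : ℂ) * (z ^ (m + 1) * Complex.exp (-((m + 1 : ℝ) * α) * Complex.I)))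
      ((Bcoef a b s (m + 1) : ℂ) * (z ^ (-(m + 1 : ℤ)) * Complex.exp (((m + 1 : ℝ) * α) * Complex.I))))
    rw [hA1, hB1] at h1
    calc ‖((1 / (m + 1 : ℝ) : ℝ) : ℂ)‖ * ‖_‖
        ≤ 1 * (|Acoef a b s (m + 1)| * r ^ (m + 1) + |Bcoef a b s (m + 1)| * r⁻¹ ^ (m + 1)) :=
          mul_le_mul h0 h1 (norm_nonneg _) zero_le_one
      _ = _ := one_mul _
  refine hnorm.trans ?_
  have hterm1 : |Acoef a b s (m + 1)| * r ^ (m + 1) ≤ (s / b) ^ (m + 1) / (1 - (a / b) ^ 2) := by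
    have step : |Acoef a b s (m + 1)| * r ^ (m + 1)
        ≤ (s ^ (m + 1) / (b ^ (2 * (m + 1)) * (1 - (a / b) ^ 2))) * b ^ (m + 1) :=
      mul_le_mul hA (pow_le_pow_left₀ hr.le hz₂.le _) (by positivity) (by positivity)
    refine step.trans_eq ?_
    have hbb : b ^ (2 * (m + 1)) = b ^ (m + 1) * b ^ (m + 1) := by rw [two_mul, pow_add]
    have hd1 : (0:ℝ) < b ^ (m + 1) * b ^ (m + 1) * (1 - (a / b) ^ 2) :=
      mul_pos (by positivity) hcden
    have hd2 : (0:ℝ) < b ^ (m + 1) * (1 - (a / b) ^ 2) := mul_pos (by positivity) hcden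
    rw [hbb, div_pow s b (m + 1), div_div, div_mul_eq_mul_div, div_eq_div_iff hd1.ne' hd2.ne']
    ring
  have hterm2 : |Bcoef a b s (m + 1)| * r⁻¹ ^ (m + 1) ≤ (a / s) ^ (m + 1) / (1 - (a / b) ^ 2) := by
    have hrinv : r⁻¹ ^ (m + 1) ≤ (a⁻¹) ^ (m + 1) :=
      pow_le_pow_left₀ (by positivity) (inv_anti₀ ha hz₁.le) _
    have step : |Bcoef a b s (m + 1)| * r⁻¹ ^ (m + 1)
        ≤ (a ^ (2 * (m + 1)) * (b ^ 2 / s) ^ (m + 1) / (b ^ (2 * (m + 1)) * (1 - (a / b) ^ 2))) * a⁻¹ ^ (m + 1) :=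
      mul_le_mul hB hrinv (by positivity) (by positivity)
    refine step.trans_eq ?_
    have haa : a ^ (2 * (m + 1)) = a ^ (m + 1) * a ^ (m + 1) := by rw [two_mul, pow_add]
    have hbb : b ^ (2 * (m + 1)) = b ^ (m + 1) * b ^ (m + 1) := by rw [two_mul, pow_add]
    have hbb2 : (b ^ 2) ^ (m + 1) = b ^ (m + 1) * b ^ (m + 1) := by
      rw [← pow_mul, two_mul, pow_add]
    have hd1 : (0:ℝ) < s ^ (m + 1) * (b ^ (m + 1) * b ^ (m + 1) * (1 - (a / b) ^ 2) * a ^ (m + 1)) :=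
      mul_pos (by positivity) (mul_pos (mul_pos (by positivity) hcden) (by positivity))
    have hd2 : (0:ℝ) < s ^ (m + 1) * (1 - (a / b) ^ 2) := mul_pos (by positivity) hcden
    rw [haa, hbb, div_pow (b ^ 2) s (m + 1), hbb2, div_pow a s (m + 1), inv_pow,
      ← div_eq_mul_inv, ← mul_div_assoc, div_div, div_div, div_div,
      div_eq_div_iff hd1.ne' hd2.ne']
    ring
  calc |Acoef a b s (m + 1)| * r ^ (m + 1) + |Bcoef a b s (m + 1)| * r⁻¹ ^ (m + 1)
      ≤ (s / b) ^ (m + 1) / (1 - (a / b) ^ 2) + (a / s) ^ (m + 1) / (1 - (a / b) ^ 2) :=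
        add_le_add hterm1 hterm2
    _ = ((s / b) ^ (m + 1) + (a / s) ^ (m + 1)) / (1 - (a / b) ^ 2) := by ring


/-- Summable geometric-type bound. -/
lemma summable_ubound (a b s : ℝ) (ha : 0 < a) (hab : a < b) (hs₁ : a < s) (hs₂ : s < b) :
    Summable (fun m : ℕ => ((s / b) ^ (m + 1) + (a / s) ^ (m + 1)) / (1 - (a / b) ^ 2)) := by
  have hb : (0:ℝ) < b := ha.trans hab
  have hs : (0:ℝ) < s := ha.trans hs₁
  have g1 : Summable (fun m : ℕ => (s / b) ^ (m + 1)) := by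
    simp only [pow_succ]
    exact (summable_geometric_of_lt_one (by positivity)
      (by rw [div_lt_one hb]; exact hs₂)).mul_right _
  have g2 : Summable (fun m : ℕ => (a / s) ^ (m + 1)) := by
    simp only [pow_succ]
    exact (summable_geometric_of_lt_one (by positivity)
      (by rw [div_lt_one hs]; exact hs₁)).mul_right _
  exact (g1.add g2).div_const _

/-- The open annulus in `ℂ`. -/
def annU (a b : ℝ) : Set ℂ := {z | a < ‖z‖ ∧ ‖z‖ < b}

lemma isOpen_annU (a b : ℝ) : IsOpen (annU a b) :=
  isOpen_Ioo.preimage continuous_norm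

lemma ne_zero_of_mem_annU {a b : ℝ} (ha : 0 < a) {z : ℂ} (hz : z ∈ annU a b) : z ≠ 0 := by
  intro h
  rw [h] at hz
  simp only [annU, Set.mem_setOf_eq, norm_zero] at hz
  linarith [hz.1]

lemma diff_cterm (a b s α : ℝ) (ha : 0 < a) (m : ℕ) :
    DifferentiableOn ℂ (cterm a b s α m) (annU a b) := by
  intro z hz
  have hz0 : z ≠ 0 := ne_zero_of_mem_annU ha hz
  apply DifferentiableAt.differentiableWithinAt
  apply DifferentiableAt.const_mul
  apply DifferentiableAt.add
  · exact (((differentiableAt_pow (m + 1)).mul_const _).const_mul _)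
  · exact (((differentiableAt_zpow.mpr (Or.inl hz0)).mul_const _).const_mul _)

/-- The sum of the series. -/
noncomputable def Fser (a b s α : ℝ) (z : ℂ) : ℂ := ∑' m : ℕ, cterm a b s α m z

lemma summable_cterm (a b s α : ℝ) (ha : 0 < a) (hab : a < b) (hs₁ : a < s) (hs₂ : s < b)
    {z : ℂ} (hz : z ∈ annU a b) : Summable (fun m : ℕ => cterm a b s α m z) :=
  Summable.of_norm_bounded (summable_ubound a b s ha hab hs₁ hs₂)
    (fun m => norm_cterm_le a b s α ha hab hs₁ hs₂ m z hz.1 hz.2)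

lemma diff_Fser (a b s α : ℝ) (ha : 0 < a) (hab : a < b) (hs₁ : a < s) (hs₂ : s < b) :
    DifferentiableOn ℂ (Fser a b s α) (annU a b) :=
  differentiableOn_tsum_of_summable_norm (summable_ubound a b s ha hab hs₁ hs₂)
    (fun m => diff_cterm a b s α ha m) (isOpen_annU a b)
    (fun m z hz => norm_cterm_le a b s α ha hab hs₁ hs₂ m z hz.1 hz.2)


/-- Local representation of `uReg` as the real part of a holomorphic function. -/
lemma local_rep (a b s α : ℝ) (ha : 0 < a) (hab : a < b) (hs₁ : a < s) (hs₂ : s < b)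
    (z₀ : ℂ) (hz₁ : a < ‖z₀‖) (hz₂ : ‖z₀‖ < b) :
    ∃ (F : ℂ → ℂ) (V : Set ℂ), IsOpen V ∧ z₀ ∈ V ∧ V ⊆ annU a b ∧
      AnalyticOnNhd ℂ F V ∧
      ∀ q : ℝ × ℝ, zOf q ∈ V → uReg a b s α q = (F (zOf q)).re := by
  have hz0 : z₀ ≠ 0 := ne_zero_of_mem_annU ha ⟨hz₁, hz₂⟩
  have habs0 : (0:ℝ) < ‖z₀‖ := lt_trans ha hz₁
  set c : ℂ := (starRingEnd ℂ) z₀ / ((‖z₀‖ : ℝ) : ℂ) with hcdef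
  have hcz₀ : c * z₀ = ((‖z₀‖ : ℝ) : ℂ) := by
    rw [hcdef, div_mul_eq_mul_div, mul_comm, Complex.mul_conj, ← Complex.sq_norm]
    rw [div_eq_iff (by exact_mod_cast habs0.ne')]
    push_cast
    ring
  have habsc : ‖c‖ = 1 := by
    rw [hcdef, norm_div, Complex.norm_conj, Complex.norm_real, Real.norm_eq_abs, _root_.abs_of_pos habs0,
      div_self habs0.ne']
  set V : Set ℂ := annU a b ∩ ((fun z => c * z) ⁻¹' Complex.slitPlane) with hVdef
  have hVopen : IsOpen V :=
    (isOpen_annU a b).inter (Complex.isOpen_slitPlane.preimage (by fun_prop))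
  have hz₀V : z₀ ∈ V := by
    refine ⟨⟨hz₁, hz₂⟩, ?_⟩
    simp only [Set.mem_preimage, hcz₀]
    exact Complex.ofReal_mem_slitPlane.2 habs0
  refine ⟨fun z => ((A0 a b s : ℝ) : ℂ) + ((B0 a b s : ℝ) : ℂ) * Complex.log (c * z)
    - Fser a b s α z, V, hVopen, hz₀V, Set.inter_subset_left, ?_, ?_⟩
  · apply DifferentiableOn.analyticOnNhd _ hVopen
    apply DifferentiableOn.sub
    · apply DifferentiableOn.const_add
      apply DifferentiableOn.const_mul
      intro z hz
      apply DifferentiableAt.differentiableWithinAt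
      have hlog : DifferentiableAt ℂ Complex.log (c * z) := Complex.differentiableAt_log hz.2
      exact hlog.comp z ((differentiableAt_const c).mul differentiableAt_id)
    · exact (diff_Fser a b s α ha hab hs₁ hs₂).mono Set.inter_subset_left
  · intro q hq
    have hzq : zOf q ∈ annU a b := hq.1
    have hsum := summable_cterm a b s α ha hab hs₁ hs₂ hzq
    have hre : ((Fser a b s α (zOf q)).re)
        = ∑' m : ℕ, (1 / (m + 1 : ℝ)) *
          (Acoef a b s (m + 1) *
            ((zOf q) ^ (m + 1) * Complex.exp (-((m + 1 : ℝ) * α) * Complex.I)).re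
          + Bcoef a b s (m + 1) *
            ((zOf q) ^ (-(m + 1 : ℤ)) * Complex.exp (((m + 1 : ℝ) * α) * Complex.I)).re) := by
      rw [Fser, Complex.re_tsum hsum]
      exact tsum_congr (fun m => re_cterm a b s α m (zOf q))
    have hlogre : (Complex.log (c * zOf q)).re = Real.log (‖zOf q‖) := by
      rw [Complex.log_re, norm_mul, habsc, one_mul]
    rw [uReg, Complex.sub_re, Complex.add_re, Complex.re_ofReal_mul, hlogre,
      Complex.ofReal_re, hre]


lemma contDiff_zOf : ContDiff ℝ 2 zOf := by
  have h : zOf = fun p : ℝ × ℝ => ((p.1 : ℂ) + (p.2 : ℂ) * Complex.I) := rfl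
  rw [h]
  exact (Complex.ofRealCLM.contDiff.comp contDiff_fst).add
    ((Complex.ofRealCLM.contDiff.comp contDiff_snd).mul contDiff_const)

end GreenRegAux

open GreenRegAux

theorem green_regular_part_harmonic (a b s α : ℝ) (ha : 0 < a) (hab : a < b)
    (hs₁ : a < s) (hs₂ : s < b) :
    ContDiffOn ℝ 2 (uReg a b s α)
      {p : ℝ × ℝ | a < ‖zOf p‖ ∧ ‖zOf p‖ < b} ∧
    ∀ p : ℝ × ℝ, a < ‖zOf p‖ → ‖zOf p‖ < b →
      deriv (fun t : ℝ => deriv (fun w : ℝ => uReg a b s α (w, p.2)) t) p.1 +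
      deriv (fun t : ℝ => deriv (fun w : ℝ => uReg a b s α (p.1, w)) t) p.2 = 0 := by
  constructor
  · intro p hp
    obtain ⟨F, V, hVopen, hz₀V, hVsub, hFan, hrep⟩ :=
      local_rep a b s α ha hab hs₁ hs₂ (zOf p) hp.1 hp.2
    have hzc : Continuous zOf := contDiff_zOf.continuous
    have hpre : IsOpen (zOf ⁻¹' V) := hVopen.preimage hzc
    have hFc : ContDiffAt ℝ 2 (fun q : ℝ × ℝ => (F (zOf q)).re) p := by
      have h1 : ContDiffAt ℂ 2 F (zOf p) := (hFan _ hz₀V).contDiffAt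
      have h2 : ContDiffAt ℝ 2 F (zOf p) := h1.restrict_scalars ℝ
      have h3 : ContDiffAt ℝ 2 (fun q : ℝ × ℝ => F (zOf q)) p :=
        h2.comp p contDiff_zOf.contDiffAt
      exact (Complex.reCLM.contDiff.contDiffAt).comp p h3
    have hEq : uReg a b s α =ᶠ[nhds p] fun q => (F (zOf q)).re :=
      Filter.eventually_of_mem (hpre.mem_nhds hz₀V) (fun q hq => hrep q hq)
    exact (hFc.congr_of_eventuallyEq hEq).contDiffWithinAt
  · intro p hp1 hp2
    obtain ⟨F, V, hVopen, hz₀V, hVsub, hFan, hrep⟩ :=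
      local_rep a b s α ha hab hs₁ hs₂ (zOf p) hp1 hp2
    have hF'an : AnalyticOnNhd ℂ (deriv F) V := hFan.deriv
    have hFd : ∀ z ∈ V, HasDerivAt F (deriv F z) z :=
      fun z hz => (hFan z hz).differentiableAt.hasDerivAt
    have hF'd : ∀ z ∈ V, HasDerivAt (deriv F) (deriv (deriv F) z) z :=
      fun z hz => (hF'an z hz).differentiableAt.hasDerivAt
    -- horizontal direction
    have hWopen : IsOpen {t : ℝ | ((t : ℂ) + (p.2 : ℂ) * Complex.I) ∈ V} := by
      apply hVopen.preimage
      fun_prop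
    have hp1W : p.1 ∈ {t : ℝ | ((t : ℂ) + (p.2 : ℂ) * Complex.I) ∈ V} := hz₀V
    have hinF : ∀ t : ℝ, ((t : ℂ) + (p.2 : ℂ) * Complex.I) ∈ V →
        HasDerivAt (fun w : ℝ => (F ((w : ℂ) + (p.2 : ℂ) * Complex.I)).re)
          ((deriv F ((t : ℂ) + (p.2 : ℂ) * Complex.I)).re) t := by
      intro t hz
      have h1 : HasDerivAt (fun w : ℂ => F (w + (p.2 : ℂ) * Complex.I))
          (deriv F ((t : ℂ) + (p.2 : ℂ) * Complex.I) * 1) (t : ℂ) :=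
        HasDerivAt.comp (t : ℂ) (hFd _ hz) ((hasDerivAt_id _).add_const _)
      rw [mul_one] at h1
      exact Complex.reCLM.hasFDerivAt.comp_hasDerivAt t h1.comp_ofReal
    have hinF' : ∀ t : ℝ, ((t : ℂ) + (p.2 : ℂ) * Complex.I) ∈ V →
        HasDerivAt (fun w : ℝ => (deriv F ((w : ℂ) + (p.2 : ℂ) * Complex.I)).re)
          ((deriv (deriv F) ((t : ℂ) + (p.2 : ℂ) * Complex.I)).re) t := by
      intro t hz
      have h1 : HasDerivAt (fun w : ℂ => deriv F (w + (p.2 : ℂ) * Complex.I))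
          (deriv (deriv F) ((t : ℂ) + (p.2 : ℂ) * Complex.I) * 1) (t : ℂ) := by
        have hadd : HasDerivAt (fun w : ℂ => w + (p.2 : ℂ) * Complex.I) 1 (t : ℂ) :=
          (hasDerivAt_id _).add_const _
        exact HasDerivAt.comp (t : ℂ) (hF'd _ hz) hadd
      rw [mul_one] at h1
      exact Complex.reCLM.hasFDerivAt.comp_hasDerivAt t h1.comp_ofReal
    have hderiv1 : ∀ t : ℝ, ((t : ℂ) + (p.2 : ℂ) * Complex.I) ∈ V →
        deriv (fun w : ℝ => uReg a b s α (w, p.2)) t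
          = (deriv F ((t : ℂ) + (p.2 : ℂ) * Complex.I)).re := by
      intro t hz
      have hEq : (fun w : ℝ => uReg a b s α (w, p.2))
          =ᶠ[nhds t] fun w : ℝ => (F ((w : ℂ) + (p.2 : ℂ) * Complex.I)).re :=
        Filter.eventually_of_mem (hWopen.mem_nhds hz) (fun w hw => hrep (w, p.2) hw)
      rw [hEq.deriv_eq, (hinF t hz).deriv]
    have houter1 : deriv (fun t : ℝ => deriv (fun w : ℝ => uReg a b s α (w, p.2)) t) p.1
        = (deriv (deriv F) (zOf p)).re := by
      have hEq : (fun t : ℝ => deriv (fun w : ℝ => uReg a b s α (w, p.2)) t)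
          =ᶠ[nhds p.1] fun t : ℝ => (deriv F ((t : ℂ) + (p.2 : ℂ) * Complex.I)).re :=
        Filter.eventually_of_mem (hWopen.mem_nhds hp1W) (fun t ht => hderiv1 t ht)
      rw [hEq.deriv_eq, (hinF' p.1 hp1W).deriv]
      rfl
    -- vertical direction
    have hW2open : IsOpen {t : ℝ | ((p.1 : ℂ) + (t : ℂ) * Complex.I) ∈ V} := by
      apply hVopen.preimage
      fun_prop
    have hp2W : p.2 ∈ {t : ℝ | ((p.1 : ℂ) + (t : ℂ) * Complex.I) ∈ V} := hz₀V
    have hinFv : ∀ t : ℝ, ((p.1 : ℂ) + (t : ℂ) * Complex.I) ∈ V →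
        HasDerivAt (fun w : ℝ => (F ((p.1 : ℂ) + (w : ℂ) * Complex.I)).re)
          ((deriv F ((p.1 : ℂ) + (t : ℂ) * Complex.I) * Complex.I).re) t := by
      intro t hz
      have h1 : HasDerivAt (fun w : ℂ => F ((p.1 : ℂ) + w * Complex.I))
          (deriv F ((p.1 : ℂ) + (t : ℂ) * Complex.I) * (1 * Complex.I)) (t : ℂ) :=
        HasDerivAt.comp (t : ℂ) (hFd _ hz) (((hasDerivAt_id _).mul_const _).const_add _)
      rw [one_mul] at h1
      exact Complex.reCLM.hasFDerivAt.comp_hasDerivAt t h1.comp_ofReal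
    have hinF'v : ∀ t : ℝ, ((p.1 : ℂ) + (t : ℂ) * Complex.I) ∈ V →
        HasDerivAt (fun w : ℝ => (deriv F ((p.1 : ℂ) + (w : ℂ) * Complex.I) * Complex.I).re)
          ((deriv (deriv F) ((p.1 : ℂ) + (t : ℂ) * Complex.I) * Complex.I * Complex.I).re) t := by
      intro t hz
      have h1 : HasDerivAt (fun w : ℂ => deriv F ((p.1 : ℂ) + w * Complex.I))
          (deriv (deriv F) ((p.1 : ℂ) + (t : ℂ) * Complex.I) * (1 * Complex.I)) (t : ℂ) := by
        have hadd : HasDerivAt (fun w : ℂ => (p.1 : ℂ) + w * Complex.I) (1 * Complex.I) (t : ℂ) :=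
          ((hasDerivAt_id _).mul_const _).const_add _
        exact HasDerivAt.comp (t : ℂ) (hF'd _ hz) hadd
      rw [one_mul] at h1
      have h2 := h1.mul_const Complex.I
      exact Complex.reCLM.hasFDerivAt.comp_hasDerivAt t h2.comp_ofReal
    have hderiv2 : ∀ t : ℝ, ((p.1 : ℂ) + (t : ℂ) * Complex.I) ∈ V →
        deriv (fun w : ℝ => uReg a b s α (p.1, w)) t
          = (deriv F ((p.1 : ℂ) + (t : ℂ) * Complex.I) * Complex.I).re := by
      intro t hz
      have hEq : (fun w : ℝ => uReg a b s α (p.1, w))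
          =ᶠ[nhds t] fun w : ℝ => (F ((p.1 : ℂ) + (w : ℂ) * Complex.I)).re :=
        Filter.eventually_of_mem (hW2open.mem_nhds hz) (fun w hw => hrep (p.1, w) hw)
      rw [hEq.deriv_eq, (hinFv t hz).deriv]
    have houter2 : deriv (fun t : ℝ => deriv (fun w : ℝ => uReg a b s α (p.1, w)) t) p.2
        = (deriv (deriv F) (zOf p) * Complex.I * Complex.I).re := by
      have hEq : (fun t : ℝ => deriv (fun w : ℝ => uReg a b s α (p.1, w)) t)
          =ᶠ[nhds p.2] fun t : ℝ => (deriv F ((p.1 : ℂ) + (t : ℂ) * Complex.I) * Complex.I).re :=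
        Filter.eventually_of_mem (hW2open.mem_nhds hp2W) (fun t ht => hderiv2 t ht)
      rw [hEq.deriv_eq, (hinF'v p.2 hp2W).deriv]
      rfl
    rw [houter1, houter2]
    have hII : deriv (deriv F) (zOf p) * Complex.I * Complex.I = -(deriv (deriv F) (zOf p)) := by
      rw [mul_assoc, Complex.I_mul_I, mul_neg_one]
    rw [hII, Complex.neg_re]
    ring
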